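/- For every n ≥ 1 and ℓ ≥ 1, the map sending D ∈ 𝔇_n^{catalan} to {(0,0),(1,0),...,(ℓ−1,0)} ∪ (D + (ℓ,0)) is an injection from 𝔇_n^{catalan} into 𝔇_{n+ℓ}^{catalan}, and it sends an element of bi-degree (d_1, d_2) to one of bi-degree (d_1 + C(ℓ,2) + nℓ, d_2). -/

import Mathlib

def col (D : Finset (ℕ × ℕ)) (p : ℕ) : Finset (ℕ × ℕ) :=
  D.filter (fun q => q.1 = p)

/-- Membership in `𝔇_n^{catalan}`. -/
def IsCat (n : ℕ) (D : Finset (ℕ × ℕ)) : Prop :=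
  D.card = n ∧
  (∀ p i : ℕ, (p, 0) ∈ D → i ≤ p → (i, 0) ∈ D) ∧
  (∀ p : ℕ,
    ((col D p).Nonempty →
      ((col D p).image Prod.snd).sup id + 1 ≤ (col D (p + 1)).card + (col D p).card) ∧
    (col D p = ∅ → ∀ q ∈ D, q.1 < p))

/-- `D ↦ {(0,0), …, (ℓ-1,0)} ∪ (D + (ℓ,0))`. -/
def shiftD (l : ℕ) (D : Finset (ℕ × ℕ)) : Finset (ℕ × ℕ) :=
  (Finset.range l).image (fun i => (i, 0)) ∪ D.image (fun q => (q.1 + l, q.2))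

lemma sh_inj (l : ℕ) : Function.Injective (fun q : ℕ × ℕ => (q.1 + l, q.2)) := by
  intro a b h
  cases a; cases b; simp_all

lemma mem_shiftD {l : ℕ} {D : Finset (ℕ × ℕ)} {q : ℕ × ℕ} :
    q ∈ shiftD l D ↔ (q.1 < l ∧ q.2 = 0) ∨ ∃ r ∈ D, r.1 + l = q.1 ∧ r.2 = q.2 := by
  simp only [shiftD, Finset.mem_union, Finset.mem_image, Finset.mem_range]
  constructor
  · rintro (⟨i, hi, rfl⟩ | ⟨r, hr, rfl⟩)
    · exact Or.inl ⟨hi, rfl⟩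
    · exact Or.inr ⟨r, hr, rfl, rfl⟩
  · rintro (⟨h1, h2⟩ | ⟨r, hr, h1, h2⟩)
    · exact Or.inl ⟨q.1, h1, by rw [← h2]⟩
    · exact Or.inr ⟨r, hr, by rw [h1, h2]⟩

lemma shift_disj (l : ℕ) (D : Finset (ℕ × ℕ)) :
    Disjoint ((Finset.range l).image (fun i => ((i, 0) : ℕ × ℕ)))
      (D.image (fun q => (q.1 + l, q.2))) := by
  rw [Finset.disjoint_left]
  rintro a ha hb
  simp only [Finset.mem_image, Finset.mem_range] at ha hb
  obtain ⟨i, hi, rfl⟩ := ha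
  obtain ⟨r, _, hr⟩ := hb
  have : r.1 + l = i := congrArg Prod.fst hr
  omega

lemma col_shift_lt {l p : ℕ} (D : Finset (ℕ × ℕ)) (hp : p < l) :
    col (shiftD l D) p = {(p, 0)} := by
  ext q
  simp only [col, Finset.mem_filter, mem_shiftD, Finset.mem_singleton]
  constructor
  · rintro ⟨(⟨h1, h2⟩ | ⟨r, hr, h1, h2⟩), hq⟩
    · cases q; simp_all
    · omega
  · rintro rfl
    exact ⟨Or.inl ⟨hp, rfl⟩, rfl⟩

lemma col_shift_ge {l p : ℕ} (D : Finset (ℕ × ℕ)) (hp : l ≤ p) :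
    col (shiftD l D) p = (col D (p - l)).image (fun q => (q.1 + l, q.2)) := by
  ext q
  simp only [col, Finset.mem_filter, mem_shiftD, Finset.mem_image]
  constructor
  · rintro ⟨(⟨h1, h2⟩ | ⟨r, hr, h1, h2⟩), hq⟩
    · omega
    · exact ⟨r, ⟨hr, by omega⟩, by cases q; simp_all⟩
  · rintro ⟨r, ⟨hr, hr1⟩, rfl⟩
    refine ⟨Or.inr ⟨r, hr, rfl, rfl⟩, ?_⟩
    show r.1 + l = p
    omega

lemma card_col_shift_ge {l p : ℕ} (D : Finset (ℕ × ℕ)) (hp : l ≤ p) :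
    (col (shiftD l D) p).card = (col D (p - l)).card := by
  rw [col_shift_ge D hp, Finset.card_image_of_injective _ (sh_inj l)]

lemma snd_col_shift_ge {l p : ℕ} (D : Finset (ℕ × ℕ)) (hp : l ≤ p) :
    (col (shiftD l D) p).image Prod.snd = (col D (p - l)).image Prod.snd := by
  rw [col_shift_ge D hp, Finset.image_image]
  rfl

theorem stmt17 (n l : ℕ) (hn : 1 ≤ n) (hl : 1 ≤ l) :
    (∀ D, IsCat n D → IsCat (n + l) (shiftD l D)) ∧
    Set.InjOn (shiftD l) {D : Finset (ℕ × ℕ) | IsCat n D} ∧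
    (∀ D, IsCat n D →
      (∑ q ∈ shiftD l D, q.1) = (∑ q ∈ D, q.1) + l.choose 2 + n * l ∧
      (∑ q ∈ shiftD l D, q.2) = ∑ q ∈ D, q.2) := by
  refine ⟨?_, ?_, ?_⟩
  · rintro D ⟨hcard, hinit, hcol⟩
    refine ⟨?_, ?_, ?_⟩
    · rw [shiftD, Finset.card_union_of_disjoint (shift_disj l D),
        Finset.card_image_of_injective _ (sh_inj l),
        Finset.card_image_of_injective _ (by intro a b h; simpa using h), hcard,
        Finset.card_range]
      omega
    · intro p i hp hip
      rw [mem_shiftD] at hp ⊢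
      rcases hp with ⟨h1, _⟩ | ⟨r, hr, h1, h2⟩
      · exact Or.inl ⟨by omega, rfl⟩
      · by_cases hil : i < l
        · exact Or.inl ⟨hil, rfl⟩
        · refine Or.inr ⟨(i - l, 0), ?_, by omega, rfl⟩
          have : r = (p - l, 0) := by cases r; simp_all; omega
          subst this
          exact hinit (p - l) (i - l) hr (by omega)
    · intro p
      constructor
      · intro hne
        by_cases hp : p < l
        · rw [col_shift_lt D hp]
          have h1 : 1 ≤ (col (shiftD l D) (p + 1)).card := by
            by_cases hpl : p + 1 < l
            · rw [col_shift_lt D hpl]; simp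
            · rw [card_col_shift_ge D (by omega)]
              have hl' : p + 1 - l = 0 := by omega
              rw [hl']
              rcases Finset.eq_empty_or_nonempty (col D 0) with he | hne'
              · exfalso
                have := (hcol 0).2 he
                have hD : D = ∅ := by
                  rw [Finset.eq_empty_iff_forall_notMem]
                  intro q hq
                  exact absurd (this q hq) (by omega)
                rw [hD] at hcard
                simp at hcard
                omega
              · exact Finset.card_pos.mpr hne'
          simp only [Finset.image_singleton, Finset.sup_singleton, id_eq,
            Finset.card_singleton]
          omega
        · push_neg at hp
          rw [snd_col_shift_ge D hp, card_col_shift_ge D hp,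
            card_col_shift_ge D (show l ≤ p + 1 by omega)]
          have hpe : p + 1 - l = (p - l) + 1 := by omega
          rw [hpe]
          apply (hcol (p - l)).1
          obtain ⟨q, hq⟩ := hne
          rw [col_shift_ge D hp] at hq
          obtain ⟨r, hr, _⟩ := Finset.mem_image.mp hq
          exact ⟨r, hr⟩
      · intro hemp q hq
        have hp : l ≤ p := by
          by_contra h
          rw [col_shift_lt D (by omega)] at hemp
          simp at hemp
        rw [col_shift_ge D hp] at hemp
        have hcole : col D (p - l) = ∅ := by
          rcases Finset.eq_empty_or_nonempty (col D (p - l)) with he | ⟨r, hr⟩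
          · exact he
          · exfalso
            rw [Finset.eq_empty_iff_forall_notMem] at hemp
            exact hemp _ (Finset.mem_image_of_mem _ hr)
        have := (hcol (p - l)).2 hcole
        rw [mem_shiftD] at hq
        rcases hq with ⟨h1, _⟩ | ⟨r, hr, h1, _⟩
        · omega
        · have := this r hr
          omega
  · intro D hD D' hD' h
    have key : ∀ E : Finset (ℕ × ℕ),
        (shiftD l E).filter (fun q => l ≤ q.1) = E.image (fun q => (q.1 + l, q.2)) := by
      intro E
      ext q
      simp only [Finset.mem_filter, mem_shiftD, Finset.mem_image]
      constructor
      · rintro ⟨(⟨h1, _⟩ | ⟨r, hr, h1, h2⟩), hq⟩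
        · omega
        · exact ⟨r, hr, by cases q; simp_all⟩
      · rintro ⟨r, hr, rfl⟩
        exact ⟨Or.inr ⟨r, hr, rfl, rfl⟩, by simp⟩
    have himg : D.image (fun q => (q.1 + l, q.2)) = D'.image (fun q => (q.1 + l, q.2)) := by
      rw [← key D, ← key D', h]
    exact Finset.image_injective (sh_inj l) himg
  · rintro D ⟨hcard, -, -⟩
    have hdisj := shift_disj l D
    have hinj1 : Set.InjOn (fun i : ℕ => ((i, 0) : ℕ × ℕ)) (Finset.range l) := by
      intro a _ b _ h; simpa using h
    constructor
    · rw [shiftD, Finset.sum_union hdisj,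
        Finset.sum_image (fun a ha b hb => hinj1 ha hb),
        Finset.sum_image (fun a _ b _ h => sh_inj l h)]
      simp only [Finset.sum_add_distrib, Finset.sum_const, smul_eq_mul, hcard]
      rw [Finset.sum_range_id, Nat.choose_two_right]
      ring
    · rw [shiftD, Finset.sum_union hdisj,
        Finset.sum_image (fun a ha b hb => hinj1 ha hb),
        Finset.sum_image (fun a _ b _ h => sh_inj l h)]
      simp
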